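/- arXiv:2004.01995 — 3 statements merged into one kernel-verified Lean document; each statement's English description precedes it below -/
import Mathlib

section
/- Let (a_n) and (b_n) be sequences of complex numbers and let c < d be real numbers. If for every real x with c < x < d the sequence a_n * cos(n x) + b_n * sin(n x) tends to 0 as n → ∞, then a_n → 0 and b_n → 0. -/
open Filter Topology MeasureTheory
set_option maxHeartbeats 1000000

lemma int_cos_mul {m : ℝ} (hm : m ≠ 0) (c d : ℝ) :
    ∫ x in c..d, Real.cos (m * x) = (Real.sin (m * d) - Real.sin (m * c)) / m := by
  rw [intervalIntegral.integral_comp_mul_left Real.cos hm, integral_cos,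
    smul_eq_mul]
  ring

lemma int_sin_mul {m : ℝ} (hm : m ≠ 0) (c d : ℝ) :
    ∫ x in c..d, Real.sin (m * x) = (Real.cos (m * c) - Real.cos (m * d)) / m := by
  rw [intervalIntegral.integral_comp_mul_left Real.sin hm, integral_sin,
    smul_eq_mul]
  ring

lemma trig_sq_integral (u v n c d : ℝ) (hn : n ≠ 0) (huv : u ^ 2 + v ^ 2 = 1) :
    ∫ x in c..d, (u * Real.cos (n * x) + v * Real.sin (n * x)) ^ 2
      = (d - c) / 2
        + ((u ^ 2 - v ^ 2) / 2) * ((Real.sin (2 * n * d) - Real.sin (2 * n * c)) / (2 * n))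
        + (u * v) * ((Real.cos (2 * n * c) - Real.cos (2 * n * d)) / (2 * n)) := by
  have hptw : ∀ x : ℝ, (u * Real.cos (n * x) + v * Real.sin (n * x)) ^ 2
      = 1 / 2 + ((u ^ 2 - v ^ 2) / 2) * Real.cos (2 * n * x) + (u * v) * Real.sin (2 * n * x) := by
    intro x
    have e : 2 * n * x = 2 * (n * x) := by ring
    have h1 : Real.cos (2 * (n * x)) = 2 * Real.cos (n * x) ^ 2 - 1 := Real.cos_two_mul _
    have h2 : Real.sin (2 * (n * x)) = 2 * Real.sin (n * x) * Real.cos (n * x) :=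
      Real.sin_two_mul _
    have h3 : Real.sin (n * x) ^ 2 + Real.cos (n * x) ^ 2 = 1 := Real.sin_sq_add_cos_sq _
    rw [e, h1, h2]
    linear_combination v ^ 2 * h3 + huv / 2
  have h2n : (2 : ℝ) * n ≠ 0 := by simp [hn]
  have hc0 : IntervalIntegrable (fun _ : ℝ => (1:ℝ)/2) volume c d :=
    intervalIntegrable_const
  have hc1 : IntervalIntegrable (fun x => ((u ^ 2 - v ^ 2) / 2) * Real.cos (2 * n * x)) volume c d :=
    (Continuous.intervalIntegrable (by continuity) c d)
  have hc2 : IntervalIntegrable (fun x => (u * v) * Real.sin (2 * n * x)) volume c d :=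
    (Continuous.intervalIntegrable (by continuity) c d)
  simp only [hptw]
  rw [intervalIntegral.integral_add (hc0.add hc1) hc2, intervalIntegral.integral_add hc0 hc1,
    intervalIntegral.integral_const_mul, intervalIntegral.integral_const_mul,
    int_cos_mul h2n, int_sin_mul h2n, intervalIntegral.integral_const, smul_eq_mul]
  ring

lemma real_cantor (a b : ℕ → ℝ) (c d : ℝ) (hcd : c < d)
    (h : ∀ x : ℝ, c < x → x < d →
      Tendsto (fun n : ℕ => a n * Real.cos (n * x) + b n * Real.sin (n * x)) atTop (𝓝 0)) :
    Tendsto a atTop (𝓝 0) ∧ Tendsto b atTop (𝓝 0) := by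
  set r : ℕ → ℝ := fun n => Real.sqrt (a n ^ 2 + b n ^ 2) with hrdef
  have hr_nonneg : ∀ n, 0 ≤ r n := fun n => Real.sqrt_nonneg _
  have hr_sq : ∀ n, r n ^ 2 = a n ^ 2 + b n ^ 2 := fun n => Real.sq_sqrt (by positivity)
  have ha_le : ∀ n, |a n| ≤ r n := by
    intro n
    rw [← Real.sqrt_sq_eq_abs]
    exact Real.sqrt_le_sqrt (by nlinarith [sq_nonneg (b n)])
  have hb_le : ∀ n, |b n| ≤ r n := by
    intro n
    rw [← Real.sqrt_sq_eq_abs]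
    exact Real.sqrt_le_sqrt (by nlinarith [sq_nonneg (a n)])
  suffices hr : Tendsto r atTop (𝓝 0) by
    refine ⟨squeeze_zero_norm (fun n => ?_) hr, squeeze_zero_norm (fun n => ?_) hr⟩
    · simpa using ha_le n
    · simpa using hb_le n
  by_contra hr
  rw [Metric.tendsto_atTop] at hr
  push_neg at hr
  obtain ⟨ε, hε, hfreq⟩ := hr
  have hfreq' : ∃ᶠ n in atTop, ε ≤ r n := by
    rw [frequently_atTop]
    intro N
    obtain ⟨n, hn, hd⟩ := hfreq N
    refine ⟨n, hn, ?_⟩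
    rwa [Real.dist_eq, sub_zero, abs_of_nonneg (hr_nonneg n)] at hd
  obtain ⟨φ, hφ, hrφ⟩ := Filter.extraction_of_frequently_atTop hfreq'
  have hrpos : ∀ k, 0 < r (φ k) := fun k => lt_of_lt_of_le hε (hrφ k)
  set u : ℕ → ℝ := fun k => a (φ k) / r (φ k) with hu
  set v : ℕ → ℝ := fun k => b (φ k) / r (φ k) with hv
  have huv : ∀ k, u k ^ 2 + v k ^ 2 = 1 := by
    intro k
    have h2 : r (φ k) ^ 2 = a (φ k) ^ 2 + b (φ k) ^ 2 := hr_sq _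
    have hne := (hrpos k).ne'
    simp only [hu, hv]; rw [div_pow, div_pow, ← add_div, ← h2]
    exact div_self (pow_ne_zero 2 hne)
  set g : ℕ → ℝ → ℝ := fun k x => u k * Real.cos (φ k * x) + v k * Real.sin (φ k * x) with hg
  have hg0 : ∀ x : ℝ, c < x → x < d → Tendsto (fun k => g k x) atTop (𝓝 0) := by
    intro x hcx hxd
    have hfx : Tendsto
        (fun k => a (φ k) * Real.cos (φ k * x) + b (φ k) * Real.sin (φ k * x)) atTop (𝓝 0) := by
      have := (h x hcx hxd).comp hφ.tendsto_atTop
      simpa [Function.comp_def] using this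
    have hbd : Tendsto
        (fun k => |a (φ k) * Real.cos (φ k * x) + b (φ k) * Real.sin (φ k * x)| / ε)
        atTop (𝓝 0) := by
      simpa using (hfx.abs).div_const ε
    refine squeeze_zero_norm (fun k => ?_) hbd
    have hgk : g k x = (a (φ k) * Real.cos (φ k * x) + b (φ k) * Real.sin (φ k * x)) / r (φ k) := by
      simp only [hg, hu, hv]
      field_simp
    rw [hgk, Real.norm_eq_abs, abs_div, abs_of_pos (hrpos k)]
    exact div_le_div_of_nonneg_left (abs_nonneg _) hε (hrφ k)
  set I : ℕ → ℝ := fun k => ∫ x in c..d, (g k x) ^ 2 with hI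
  have hI0 : Tendsto I atTop (𝓝 0) := by
    have h0 : (0 : ℝ) = ∫ x in c..d, (0 : ℝ) := by simp
    rw [h0]
    refine intervalIntegral.tendsto_integral_filter_of_dominated_convergence
      (bound := fun _ => (4 : ℝ)) ?_ ?_ ?_ ?_
    · refine Eventually.of_forall fun k => Continuous.aestronglyMeasurable ?_
      exact ((continuous_const.mul (Real.continuous_cos.comp
        (continuous_const.mul continuous_id))).add (continuous_const.mul
        (Real.continuous_sin.comp (continuous_const.mul continuous_id)))).pow 2
    · refine Eventually.of_forall fun k => Eventually.of_forall fun x _ => ?_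
      have h1 := huv k
      have hcos := Real.neg_one_le_cos (φ k * x)
      have hcos' := Real.cos_le_one (φ k * x)
      have hsin := Real.neg_one_le_sin (φ k * x)
      have hsin' := Real.sin_le_one (φ k * x)
      have : |g k x| ≤ 2 := by
        simp only [hg]
        have h1u : |u k| ≤ 1 := by
          rw [abs_le]
          constructor <;> nlinarith [sq_nonneg (u k + 1), sq_nonneg (u k - 1), sq_nonneg (v k)]
        have h1v : |v k| ≤ 1 := by
          rw [abs_le]
          constructor <;> nlinarith [sq_nonneg (v k + 1), sq_nonneg (v k - 1), sq_nonneg (u k)]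
        calc |u k * Real.cos (φ k * x) + v k * Real.sin (φ k * x)|
            ≤ |u k * Real.cos (φ k * x)| + |v k * Real.sin (φ k * x)| := abs_add_le _ _
          _ ≤ 1 * 1 + 1 * 1 := by
              rw [abs_mul, abs_mul]
              gcongr <;> first
                | exact h1u | exact h1v
                | exact Real.abs_cos_le_one _ | exact Real.abs_sin_le_one _
          _ = 2 := by norm_num
      rw [Real.norm_eq_abs, abs_pow]
      calc |g k x| ^ 2 ≤ 2 ^ 2 := pow_le_pow_left₀ (abs_nonneg _) this 2
        _ = 4 := by norm_num
    · exact intervalIntegrable_const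
    · have hd0 : (volume : Measure ℝ) {d} = 0 := measure_singleton d
      filter_upwards [compl_mem_ae_iff.mpr hd0] with x hx hxI
      rw [Set.uIoc_of_le hcd.le] at hxI
      have hx' : x < d := lt_of_le_of_ne hxI.2 hx
      simpa using (hg0 x hxI.1 hx').pow 2
  have hdiff : Tendsto (fun k => I k - (d - c) / 2) atTop (𝓝 0) := by
    have hbound : ∀ k, 1 ≤ k → |I k - (d - c) / 2| ≤ 1 / (k : ℝ) := by
      intro k hk
      have hφk : (k : ℝ) ≤ (φ k : ℝ) := by exact_mod_cast hφ.le_apply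
      have hkpos : (0 : ℝ) < k := by exact_mod_cast hk
      have hnpos : (0 : ℝ) < (φ k : ℝ) := lt_of_lt_of_le hkpos hφk
      have hn0 : ((φ k : ℝ)) ≠ 0 := hnpos.ne'
      have hIk := trig_sq_integral (u k) (v k) (φ k) c d hn0 (huv k)
      have heq : I k - (d - c) / 2
          = ((u k ^ 2 - v k ^ 2) / 2)
              * ((Real.sin (2 * φ k * d) - Real.sin (2 * φ k * c)) / (2 * φ k))
            + (u k * v k) * ((Real.cos (2 * φ k * c) - Real.cos (2 * φ k * d)) / (2 * φ k)) := by
        simp only [hI, hg]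
        rw [hIk]; ring
      have hA : |(u k ^ 2 - v k ^ 2) / 2| ≤ 1 / 2 := by
        have h1 : |u k ^ 2 - v k ^ 2| ≤ 1 := by
          rw [abs_le]
          constructor <;> nlinarith [sq_nonneg (u k), sq_nonneg (v k), huv k]
        calc |(u k ^ 2 - v k ^ 2) / 2| = |u k ^ 2 - v k ^ 2| / 2 := by
              rw [abs_div, abs_two]
          _ ≤ 1 / 2 := by linarith
      have hB : |u k * v k| ≤ 1 / 2 := by
        rw [abs_mul]
        nlinarith [sq_nonneg (|u k| - |v k|), sq_abs (u k), sq_abs (v k), huv k,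
          abs_nonneg (u k), abs_nonneg (v k)]
      have hX : |(Real.sin (2 * φ k * d) - Real.sin (2 * φ k * c)) / (2 * φ k)| ≤ 1 / (φ k : ℝ) := by
        rw [abs_div, abs_of_pos (by positivity : (0:ℝ) < 2 * φ k), div_le_div_iff₀ (by positivity) hnpos]
        have := abs_sub (Real.sin (2 * φ k * d)) (Real.sin (2 * φ k * c))
        calc |Real.sin (2 * φ k * d) - Real.sin (2 * φ k * c)| * (φ k : ℝ)
            ≤ 2 * (φ k : ℝ) := by
              gcongr
              calc |Real.sin (2 * φ k * d) - Real.sin (2 * φ k * c)|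
                  ≤ |Real.sin (2 * φ k * d)| + |Real.sin (2 * φ k * c)| := abs_sub _ _
                _ ≤ 1 + 1 := add_le_add (Real.abs_sin_le_one _) (Real.abs_sin_le_one _)
                _ = 2 := by norm_num
          _ = 1 * (2 * (φ k : ℝ)) := by ring
      have hY : |(Real.cos (2 * φ k * c) - Real.cos (2 * φ k * d)) / (2 * φ k)| ≤ 1 / (φ k : ℝ) := by
        rw [abs_div, abs_of_pos (by positivity : (0:ℝ) < 2 * φ k), div_le_div_iff₀ (by positivity) hnpos]
        calc |Real.cos (2 * φ k * c) - Real.cos (2 * φ k * d)| * (φ k : ℝ)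
            ≤ 2 * (φ k : ℝ) := by
              gcongr
              calc |Real.cos (2 * φ k * c) - Real.cos (2 * φ k * d)|
                  ≤ |Real.cos (2 * φ k * c)| + |Real.cos (2 * φ k * d)| := abs_sub _ _
                _ ≤ 1 + 1 := add_le_add (Real.abs_cos_le_one _) (Real.abs_cos_le_one _)
                _ = 2 := by norm_num
          _ = 1 * (2 * (φ k : ℝ)) := by ring
      rw [heq]
      calc |_| ≤ |((u k ^ 2 - v k ^ 2) / 2)
              * ((Real.sin (2 * φ k * d) - Real.sin (2 * φ k * c)) / (2 * φ k))|
            + |(u k * v k) * ((Real.cos (2 * φ k * c) - Real.cos (2 * φ k * d)) / (2 * φ k))| :=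
          abs_add_le _ _
        _ ≤ (1/2) * (1 / (φ k : ℝ)) + (1/2) * (1 / (φ k : ℝ)) := by
            rw [abs_mul, abs_mul]
            gcongr <;> positivity
        _ = 1 / (φ k : ℝ) := by ring
        _ ≤ 1 / (k : ℝ) := by
            apply div_le_div_of_nonneg_left (by norm_num) hkpos hφk
    have htend : Tendsto (fun k : ℕ => 1 / (k : ℝ)) atTop (𝓝 0) := by
      exact tendsto_one_div_atTop_nhds_zero_nat
    refine squeeze_zero_norm' ?_ htend
    filter_upwards [eventually_ge_atTop 1] with k hk
    simpa using hbound k hk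
  have hIlim : Tendsto I atTop (𝓝 ((d - c) / 2)) := by
    have := hdiff.add_const ((d - c) / 2)
    simpa using this
  have : (0 : ℝ) = (d - c) / 2 := tendsto_nhds_unique hI0 hIlim
  linarith

theorem cantor_trig (a b : ℕ → ℂ) (c d : ℝ) (hcd : c < d)
    (h : ∀ x : ℝ, c < x → x < d →
      Tendsto (fun n : ℕ => a n * (Real.cos (n * x) : ℂ) + b n * (Real.sin (n * x) : ℂ))
        atTop (𝓝 0)) :
    Tendsto a atTop (𝓝 0) ∧ Tendsto b atTop (𝓝 0) := by
  have hre : ∀ x : ℝ, c < x → x < d →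
      Tendsto (fun n : ℕ => (a n).re * Real.cos (n * x) + (b n).re * Real.sin (n * x))
        atTop (𝓝 0) := by
    intro x hcx hxd
    have := (Complex.continuous_re.tendsto 0).comp (h x hcx hxd)
    simpa [Function.comp_def, Complex.add_re, Complex.mul_re, ← Complex.ofReal_mul,
      Complex.cos_ofReal_re, Complex.cos_ofReal_im, Complex.sin_ofReal_re,
      Complex.sin_ofReal_im] using this
  have him : ∀ x : ℝ, c < x → x < d →
      Tendsto (fun n : ℕ => (a n).im * Real.cos (n * x) + (b n).im * Real.sin (n * x))
        atTop (𝓝 0) := by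
    intro x hcx hxd
    have := (Complex.continuous_im.tendsto 0).comp (h x hcx hxd)
    simpa [Function.comp_def, Complex.add_im, Complex.mul_im, ← Complex.ofReal_mul,
      Complex.cos_ofReal_re, Complex.cos_ofReal_im, Complex.sin_ofReal_re,
      Complex.sin_ofReal_im] using this
  obtain ⟨hare, hbre⟩ := real_cantor (fun n => (a n).re) (fun n => (b n).re) c d hcd hre
  obtain ⟨haim, hbim⟩ := real_cantor (fun n => (a n).im) (fun n => (b n).im) c d hcd him
  constructor
  · refine squeeze_zero_norm (fun n => Complex.norm_le_abs_re_add_abs_im (a n)) ?_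
    simpa using hare.abs.add haim.abs
  · refine squeeze_zero_norm (fun n => Complex.norm_le_abs_re_add_abs_im (b n)) ?_
    simpa using hbre.abs.add hbim.abs
end

section
/- Let δ > 0 and let (B_n) be a bounded sequence of complex numbers such that for every real t with 0 < t < δ the sequence B_n * sin(n t) tends to 0 as n → ∞. Then B_n → 0. -/
open Filter Topology MeasureTheory intervalIntegral

theorem lemmaA (δ : ℝ) (hδ : 0 < δ) (B : ℕ → ℂ) (M : ℝ) (hM : ∀ n, ‖B n‖ ≤ M)
    (h : ∀ t : ℝ, 0 < t → t < δ →
      Tendsto (fun n : ℕ => B n * (Real.sin (n * t) : ℂ)) atTop (𝓝 0)) :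
    Tendsto B atTop (𝓝 0) := by
  have hM0 : 0 ≤ M := le_trans (norm_nonneg _) (hM 0)
  set μ : Measure ℝ := volume.restrict (Set.Ioo 0 δ) with hμ
  set F : ℕ → ℝ → ℝ := fun n t => ‖B n‖ * Real.sin (n * t) ^ 2 with hF
  -- Dominated convergence: the integrals tend to 0
  have hI : Tendsto (fun n => ∫ t, F n t ∂μ) atTop (𝓝 0) := by
    have h0 : (0 : ℝ) = ∫ (_ : ℝ), (0 : ℝ) ∂μ := by simp
    rw [h0]
    apply tendsto_integral_of_dominated_convergence (fun _ => M)
    · intro n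
      exact (continuous_const.mul ((Real.continuous_sin.comp
        (continuous_const.mul continuous_id)).pow 2)).aestronglyMeasurable
    · exact integrable_const M
    · intro n
      refine Eventually.of_forall fun t => ?_
      have : Real.sin (n * t) ^ 2 ≤ 1 := Real.sin_sq_le_one _
      have hB := norm_nonneg (B n)
      rw [Real.norm_eq_abs, abs_of_nonneg (by positivity)]
      calc ‖B n‖ * Real.sin (n * t) ^ 2 ≤ ‖B n‖ * 1 := by
            exact mul_le_mul_of_nonneg_left this hB
        _ ≤ M := by simpa using hM n
    · rw [hμ, ae_restrict_iff' measurableSet_Ioo]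
      refine Eventually.of_forall fun t ht => ?_
      obtain ⟨ht0, htδ⟩ := ht
      have h2 := (h t ht0 htδ).norm
      simp only [norm_zero] at h2
      have h3 : Tendsto (fun n : ℕ => ‖B n‖ * |Real.sin (n * t)|) atTop (𝓝 0) := by
        simpa only [norm_mul, Complex.norm_real, Real.norm_eq_abs] using h2
      have hle : ∀ n : ℕ, F n t ≤ ‖B n‖ * |Real.sin (n * t)| := by
        intro n
        have : Real.sin (n * t) ^ 2 ≤ |Real.sin (n * t)| := by
          nlinarith [Real.abs_sin_le_one (n * t), abs_nonneg (Real.sin (n*t)), sq_abs (Real.sin (n*t))]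
        exact mul_le_mul_of_nonneg_left this (norm_nonneg _)
      have hge : ∀ n : ℕ, (0:ℝ) ≤ F n t := fun n => by positivity
      exact tendsto_of_tendsto_of_tendsto_of_le_of_le tendsto_const_nhds h3 hge hle
  -- Compute the integral: it equals |B n| * (δ/2 - sin(nδ)cos(nδ)/(2n))
  have hIeq : ∀ n : ℕ, 1 ≤ n → ∫ t, F n t ∂μ =
      ‖B n‖ * (δ / 2 - Real.sin (n * δ) * Real.cos (n * δ) / (2 * n)) := by
    intro n hn
    have hn0 : (n : ℝ) ≠ 0 := Nat.cast_ne_zero.mpr (by omega)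
    have : ∫ t, F n t ∂μ = ∫ t in (0:ℝ)..δ, F n t := by
      rw [intervalIntegral.integral_of_le hδ.le, hμ,
        MeasureTheory.integral_Ioc_eq_integral_Ioo]
    rw [this, hF]
    rw [intervalIntegral.integral_const_mul]
    have hcomp : (∫ t in (0:ℝ)..δ, Real.sin ((n:ℝ) * t) ^ 2)
        = ((n:ℝ))⁻¹ • ∫ u in ((n:ℝ)*0)..((n:ℝ)*δ), Real.sin u ^ 2 :=
      intervalIntegral.integral_comp_mul_left (fun u => Real.sin u ^ 2) hn0
    rw [hcomp, mul_zero, integral_sin_sq]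
    simp only [Real.sin_zero, Real.cos_zero, smul_eq_mul]
    field_simp
    ring
  -- Eventually the sine-square integral is at least δ/4
  obtain ⟨N, hN⟩ := exists_nat_gt (2 / δ)
  have hbound : ∀ n : ℕ, max N 1 ≤ n →
      ‖B n‖ ≤ (4 / δ) * ∫ t, F n t ∂μ := by
    intro n hn
    have hn1 : 1 ≤ n := le_trans (le_max_right _ _) hn
    have hnN : (N : ℝ) ≤ n := Nat.cast_le.mpr (le_trans (le_max_left _ _) hn)
    have hnpos : (0:ℝ) < n := by positivity
    have hn2 : 2 / δ < (n:ℝ) := lt_of_lt_of_le hN hnN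
    rw [hIeq n hn1]
    have hsc : |Real.sin (n * δ) * Real.cos (n * δ)| ≤ 1 := by
      rw [abs_mul]
      nlinarith [Real.abs_sin_le_one ((n:ℝ) * δ), Real.abs_cos_le_one ((n:ℝ) * δ),
        abs_nonneg (Real.sin ((n:ℝ)*δ)), abs_nonneg (Real.cos ((n:ℝ)*δ))]
    have hterm : Real.sin (n * δ) * Real.cos (n * δ) / (2 * n) ≤ δ / 4 := by
      have h1 : Real.sin (n * δ) * Real.cos (n * δ) ≤ 1 := le_trans (le_abs_self _) hsc
      have h2 : (1:ℝ) / (2 * n) ≤ δ / 4 := by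
        rw [div_le_div_iff₀ (by positivity) (by norm_num)]
        have : 2 < δ * n := by
          have := (div_lt_iff₀ hδ).mp hn2
          nlinarith
        nlinarith
      calc Real.sin (n * δ) * Real.cos (n * δ) / (2 * n) ≤ 1 / (2 * n) := by
            apply div_le_div_of_nonneg_right h1 (by positivity) |>.trans_eq rfl
        _ ≤ δ / 4 := h2
    have hJ : δ / 4 ≤ δ / 2 - Real.sin (n * δ) * Real.cos (n * δ) / (2 * n) := by
      linarith
    have hB := norm_nonneg (B n)
    calc ‖B n‖ = (4/δ) * (‖B n‖ * (δ/4)) := by field_simp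
      _ ≤ (4/δ) * (‖B n‖ *
            (δ / 2 - Real.sin (n * δ) * Real.cos (n * δ) / (2 * n))) := by
          apply mul_le_mul_of_nonneg_left _ (by positivity)
          exact mul_le_mul_of_nonneg_left hJ hB
  -- Squeeze
  have habs : Tendsto (fun n => ‖B n‖) atTop (𝓝 0) := by
    have hupper : Tendsto (fun n => (4 / δ) * ∫ t, F n t ∂μ) atTop (𝓝 0) := by
      have := hI.const_mul (4 / δ)
      simpa using this
    refine tendsto_of_tendsto_of_tendsto_of_le_of_le' tendsto_const_nhds hupper ?_ ?_
    · exact Eventually.of_forall fun n => norm_nonneg _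
    · exact eventually_atTop.mpr ⟨max N 1, hbound⟩
  rw [tendsto_zero_iff_norm_tendsto_zero]
  exact habs
end

section
/- Let δ > 0 and let (C_n) be a sequence of complex numbers such that for every real t with 0 < t < δ the sequence C_n * sin(n t) tends to 0 as n → ∞. Then C_n → 0. -/
open Filter Topology MeasureTheory

theorem lemmaB (δ : ℝ) (hδ : 0 < δ) (C : ℕ → ℂ)
    (h : ∀ t : ℝ, 0 < t → t < δ →
      Tendsto (fun n : ℕ => C n * (Real.sin (n * t) : ℂ)) atTop (𝓝 0)) :
    Tendsto C atTop (𝓝 0) := by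
  by_contra hC
  rw [Metric.tendsto_atTop] at hC
  push_neg at hC
  obtain ⟨ε, hε, hfreq⟩ := hC
  have hfreq' : ∃ᶠ n in atTop, ε ≤ ‖C n‖ := by
    rw [Filter.frequently_atTop]
    intro N
    obtain ⟨n, hn, hn'⟩ := hfreq N
    exact ⟨n, hn, by simpa [dist_eq_norm] using hn'⟩
  obtain ⟨φ, hφmono, hφ⟩ := Filter.extraction_of_frequently_atTop hfreq'
  set δ' : ℝ := δ / 2 with hδ'def
  have hδ' : 0 < δ' := by positivity
  have hδ'δ : δ' < δ := by rw [hδ'def]; linarith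
  -- sin (φ k * t) → 0 for t ∈ (0, δ)
  have hsin : ∀ t : ℝ, 0 < t → t < δ →
      Tendsto (fun k : ℕ => Real.sin (φ k * t)) atTop (𝓝 0) := by
    intro t ht htδ
    have h1 : Tendsto (fun k : ℕ => C (φ k) * (Real.sin (φ k * t) : ℂ)) atTop (𝓝 0) :=
      (h t ht htδ).comp hφmono.tendsto_atTop
    have h2 : Tendsto (fun k : ℕ => ‖C (φ k) * (Real.sin (φ k * t) : ℂ)‖ / ε) atTop (𝓝 0) := by
      simpa using (h1.norm.div_const ε)
    apply squeeze_zero_norm _ h2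
    intro k
    have hk : ε ≤ ‖C (φ k)‖ := hφ k
    rw [norm_mul, Real.norm_eq_abs, le_div_iff₀ hε]
    have h3 : ‖(Real.sin (φ k * t) : ℂ)‖ = |Real.sin (φ k * t)| := by
      rw [Complex.norm_real, Real.norm_eq_abs]
    rw [h3]
    nlinarith [abs_nonneg (Real.sin (φ k * t))]
  -- DCT: integrals of sin² tend to 0
  have hDCT : Tendsto (fun k : ℕ => ∫ t in Set.Ioc 0 δ', Real.sin (φ k * t) ^ 2) atTop
      (𝓝 0) := by
    have := tendsto_integral_of_dominated_convergence (μ := volume.restrict (Set.Ioc 0 δ'))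
      (F := fun k t => Real.sin (φ k * t) ^ 2) (f := fun _ => (0 : ℝ)) (fun _ => (1 : ℝ))
      (fun k => (Continuous.aestronglyMeasurable (by continuity)))
      (integrable_const 1)
      (fun k => Filter.Eventually.of_forall fun t => by
        rw [Real.norm_eq_abs, abs_of_nonneg (sq_nonneg _)]
        calc Real.sin (φ k * t) ^ 2 ≤ 1 ^ 2 := by
              apply sq_le_sq'
              · linarith [Real.neg_one_le_sin (φ k * t)]
              · exact Real.sin_le_one _
          _ = 1 := one_pow 2)
      ?_
    · simpa using this
    · rw [ae_restrict_iff' measurableSet_Ioc]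
      refine Filter.Eventually.of_forall fun t ht => ?_
      have := hsin t ht.1 (lt_of_le_of_lt ht.2 hδ'δ)
      simpa [sq] using (this.mul this)
  -- Lower bound on the integrals
  have hlow : ∀ k : ℕ, 1 ≤ φ k →
      δ' / 2 - 1 / (2 * φ k) ≤ ∫ t in Set.Ioc 0 δ', Real.sin (φ k * t) ^ 2 := by
    intro k hk1
    have hn : (0 : ℝ) < (φ k : ℝ) := by exact_mod_cast hk1
    have heq : (∫ t in Set.Ioc 0 δ', Real.sin (φ k * t) ^ 2)
        = ∫ t in (0:ℝ)..δ', Real.sin (φ k * t) ^ 2 := by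
      rw [intervalIntegral.integral_of_le hδ'.le]
    rw [heq]
    have hsub : (∫ t in (0:ℝ)..δ', Real.sin (φ k * t) ^ 2)
        = (φ k : ℝ)⁻¹ • ∫ u in ((φ k : ℝ) * 0)..((φ k : ℝ) * δ'), Real.sin u ^ 2 :=
      intervalIntegral.integral_comp_mul_left (fun u => Real.sin u ^ 2) hn.ne'
    rw [hsub, mul_zero, integral_sin_sq, Real.sin_zero, Real.cos_zero, smul_eq_mul]
    set n : ℝ := (φ k : ℝ)
    set s : ℝ := Real.sin (n * δ')
    set c : ℝ := Real.cos (n * δ')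
    have hsc : s * c ≤ 1 := by
      nlinarith [Real.sin_sq_add_cos_sq (n * δ'), sq_nonneg (s - c)]
    have hrw : δ' / 2 - 1 / (2 * n) = n⁻¹ * ((n * δ' - 1) / 2) := by
      field_simp
    rw [hrw]
    apply mul_le_mul_of_nonneg_left _ (inv_pos.mpr hn).le
    linarith
  -- contradiction
  have hev : ∀ᶠ k in atTop, |∫ t in Set.Ioc 0 δ', Real.sin (φ k * t) ^ 2| < δ' / 4 := by
    have := hDCT
    rw [Metric.tendsto_atTop] at this
    obtain ⟨N, hN⟩ := this (δ' / 4) (by positivity)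
    exact Filter.eventually_atTop.mpr ⟨N, fun k hk => by
      simpa [Real.dist_eq] using hN k hk⟩
  obtain ⟨K, hK⟩ := Filter.eventually_atTop.mp hev
  obtain ⟨k, hkK, hk1, hk2⟩ : ∃ k : ℕ, K ≤ k ∧ 1 ≤ k ∧ 1 / (2 * (k:ℝ)) < δ' / 4 := by
    obtain ⟨k, hk⟩ := exists_nat_gt (max (K:ℝ) (4 / δ'))
    have h4 : (4:ℝ) / δ' < k := lt_of_le_of_lt (le_max_right _ _) hk
    have hkpos : (0:ℝ) < k := lt_trans (by positivity) h4
    refine ⟨k, ?_, by exact_mod_cast hkpos, ?_⟩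
    · exact_mod_cast le_of_lt (lt_of_le_of_lt (le_max_left (K:ℝ) _) hk)
    · rw [div_lt_iff₀ (by positivity)]
      rw [div_lt_iff₀ hδ'] at h4
      nlinarith
  have hφk1 : 1 ≤ φ k := le_trans hk1 hφmono.le_apply
  have hlb := hlow k hφk1
  have hub := hK k hkK
  rw [abs_lt] at hub
  have hφkk : (k:ℝ) ≤ (φ k : ℝ) := by exact_mod_cast hφmono.le_apply
  have hkpos : (0:ℝ) < k := by exact_mod_cast hk1
  have hmono : 1 / (2 * (φ k : ℝ)) ≤ 1 / (2 * (k:ℝ)) :=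
    one_div_le_one_div_of_le (by positivity) (by linarith)
  linarith [hub.2]
end
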